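/- Let n ≥ 3 and let Cay(ℤ_n, S) be a connected non-complete circulant graph of degree p − 1, where p is a prime. Then Cay(ℤ_n, S) admits a perfect code if and only if p divides n and (S_0 − S_0) ∩ ⟨p⟩ = {0}, where ⟨p⟩ is the subgroup of ℤ_n generated by p. -/

import Mathlib

open Pointwise

/-- `D` is a perfect code in `Cay(ℤ_n, S)` iff every element of `ℤ_n` has a unique
representation `s + d` with `s ∈ S₀ = S ∪ {0}` and `d ∈ D`. -/
def IsCayleyPerfectCode {n : ℕ} (S0 D : Set (ZMod n)) : Prop :=
  ∀ g : ZMod n, ∃! sd : ZMod n × ZMod n, sd.1 ∈ S0 ∧ sd.2 ∈ D ∧ sd.1 + sd.2 = g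

open Polynomial

section Aux
variable {n p : ℕ}

lemma mem_zmult_iff [NeZero n] [NeZero p] (hpn : p ∣ n) (x : ZMod n) :
    x ∈ AddSubgroup.zmultiples ((p : ZMod n)) ↔ (ZMod.castHom hpn (ZMod p)) x = 0 := by
  constructor
  · rintro ⟨c, rfl⟩
    show (ZMod.castHom hpn (ZMod p)) (c • (p : ZMod n)) = 0
    rw [zsmul_eq_mul, map_mul, map_intCast, map_natCast, ZMod.natCast_self, mul_zero]
  · intro h
    have hval : (p : ℕ) ∣ x.val := by
      rw [← ZMod.natCast_eq_zero_iff]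
      rwa [ZMod.castHom_apply, ← ZMod.natCast_val] at h
    obtain ⟨t, ht⟩ := hval
    refine ⟨(t : ℤ), ?_⟩
    have hx : ((x.val : ℕ) : ZMod n) = x := by rw [ZMod.natCast_val, ZMod.cast_id]
    show (t:ℤ) • ((p:ℕ) : ZMod n) = x
    rw [zsmul_eq_mul, ← hx, ht]
    push_cast
    ring

end Aux

section Suff
variable {n p : ℕ}

lemma sufficiency [NeZero n] (hp : p.Prime) (S : Finset (ZMod n))
    (h0 : (0 : ZMod n) ∉ S) (hdeg : S.card = p - 1) (hpn : p ∣ n)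
    (hint : (insert (0 : ZMod n) (S : Set (ZMod n)) - insert (0 : ZMod n) (S : Set (ZMod n)))
        ∩ (AddSubgroup.zmultiples ((p : ZMod n)) : Set (ZMod n)) = {0}) :
    IsCayleyPerfectCode (insert (0 : ZMod n) (S : Set (ZMod n)))
      (AddSubgroup.zmultiples ((p : ZMod n)) : Set (ZMod n)) := by
  haveI : NeZero p := ⟨hp.ne_zero⟩
  set A : Set (ZMod n) := insert (0 : ZMod n) (S : Set (ZMod n)) with hA
  set Af : Finset (ZMod n) := insert (0 : ZMod n) S with hAf
  have hcoe : (Af : Set (ZMod n)) = A := by rw [hAf, Finset.coe_insert]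
  have hAcard : Af.card = p := by
    rw [hAf, Finset.card_insert_of_notMem h0, hdeg]
    have := hp.two_le; omega
  set pi := ZMod.castHom hpn (ZMod p) with hpi
  have hinj : ∀ s ∈ A, ∀ s' ∈ A, pi s = pi s' → s = s' := by
    intro s hs s' hs' hss
    have h1 : s - s' ∈ A - A := Set.sub_mem_sub hs hs'
    have h2 : s - s' ∈ AddSubgroup.zmultiples ((p : ZMod n)) := by
      rw [mem_zmult_iff hpn, map_sub, hss, sub_self]
    have : s - s' ∈ (A - A) ∩ (AddSubgroup.zmultiples ((p : ZMod n)) : Set (ZMod n)) := ⟨h1, h2⟩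
    rw [hint] at this
    have : s - s' = 0 := this
    linear_combination this
  have hsurj : ∀ y : ZMod p, ∃ s ∈ Af, pi s = y := by
    intro y
    have hic : (Af.image pi).card = p := by
      rw [Finset.card_image_of_injOn (fun x hx y hy h => hinj x (hcoe ▸ hx) y (hcoe ▸ hy) h), hAcard]
    have : Af.image pi = Finset.univ := Finset.eq_univ_of_card _ (by rw [hic, ZMod.card])
    have hy : y ∈ Af.image pi := this ▸ Finset.mem_univ y
    obtain ⟨s, hs, hsy⟩ := Finset.mem_image.mp hy
    exact ⟨s, hs, hsy⟩
  intro g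
  obtain ⟨s, hs, hsy⟩ := hsurj (pi g)
  refine ⟨(s, g - s), ⟨hcoe ▸ hs, ?_, by simp⟩, ?_⟩
  · show (g - s) ∈ (AddSubgroup.zmultiples ((p : ZMod n)) : Set (ZMod n))
    show g - s ∈ AddSubgroup.zmultiples ((p : ZMod n))
    rw [mem_zmult_iff hpn, map_sub, hsy, sub_self]
  · rintro ⟨s', d'⟩ ⟨hs', hd', hadd⟩
    have hd'm : (d' : ZMod n) ∈ AddSubgroup.zmultiples ((p : ZMod n)) := hd'
    have hpid' : pi d' = 0 := (mem_zmult_iff hpn d').mp hd'm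
    have hps' : pi s' = pi g := by
      have := congrArg pi hadd
      rw [map_add, hpid', add_zero] at this
      exact this
    have hss : s' = s := hinj s' hs' s (hcoe ▸ hs) (by rw [hps', hsy])
    have : d' = g - s := by rw [← hadd, hss]; ring
    simp [hss, this]

end Suff

lemma mem_zmult_of_dvd_val {n m : ℕ} [NeZero n] {x : ZMod n} (h : m ∣ x.val) :
    x ∈ AddSubgroup.zmultiples ((m : ZMod n)) := by
  obtain ⟨t, ht⟩ := h
  refine ⟨(t : ℤ), ?_⟩
  show (t : ℤ) • ((m : ℕ) : ZMod n) = x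
  have hx : ((x.val : ℕ) : ZMod n) = x := by rw [ZMod.natCast_val, ZMod.cast_id]
  rw [zsmul_eq_mul, ← hx, ht]
  push_cast
  ring

lemma pow_mod_eq {z : ℂ} {m : ℕ} (hz : z ^ m = 1) (t : ℕ) : z ^ (t % m) = z ^ t := by
  conv_rhs => rw [← Nat.mod_add_div t m, pow_add, pow_mul, hz, one_pow, mul_one]

lemma sum_zmod_pow_val {n : ℕ} [NeZero n] (z : ℂ) (hzn : z ^ n = 1) (hz1 : z ≠ 1) :
    ∑ g : ZMod n, z ^ g.val = 0 := by
  have h1 : ∑ g : ZMod n, z ^ g.val = ∑ i ∈ Finset.range n, z ^ i := by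
    refine Finset.sum_bij' (fun g _ => g.val) (fun i _ => (i : ZMod n)) ?_ ?_ ?_ ?_ ?_
    · intro g _; exact Finset.mem_range.mpr (ZMod.val_lt g)
    · intro i _; exact Finset.mem_univ _
    · intro g _; show ((g.val : ℕ) : ZMod n) = g; rw [ZMod.natCast_val, ZMod.cast_id]
    · intro i hi; exact ZMod.val_cast_of_lt (Finset.mem_range.mp hi)
    · intro g _; rfl
  rw [h1, geom_sum_eq hz1, hzn, sub_self, zero_div]

lemma code_card {n : ℕ} [NeZero n] (Af Df : Finset (ZMod n))
    (hbij : ∀ g : ZMod n, ∃! sd : ZMod n × ZMod n,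
      sd.1 ∈ Af ∧ sd.2 ∈ Df ∧ sd.1 + sd.2 = g) :
    Af.card * Df.card = n := by
  have h : (Af ×ˢ Df).card = (Finset.univ : Finset (ZMod n)).card := by
    refine Finset.card_bij (fun sd _ => sd.1 + sd.2) (fun _ _ => Finset.mem_univ _) ?_ ?_
    · intro sd hsd sd' hsd' hsum
      rw [Finset.mem_product] at hsd hsd'
      obtain ⟨u, -, hu⟩ := hbij (sd.1 + sd.2)
      rw [hu sd ⟨hsd.1, hsd.2, rfl⟩, hu sd' ⟨hsd'.1, hsd'.2, hsum.symm⟩]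
    · intro g _
      obtain ⟨u, ⟨h1, h2, h3⟩, -⟩ := hbij g
      exact ⟨u, Finset.mem_product.mpr ⟨h1, h2⟩, h3⟩
  rw [← Finset.card_product, h, Finset.card_univ, ZMod.card]

lemma code_sum {n : ℕ} [NeZero n] (Af Df : Finset (ZMod n))
    (hbij : ∀ g : ZMod n, ∃! sd : ZMod n × ZMod n,
      sd.1 ∈ Af ∧ sd.2 ∈ Df ∧ sd.1 + sd.2 = g)
    (z : ℂ) (hzn : z ^ n = 1) (hz1 : z ≠ 1) :
    (∑ s ∈ Af, z ^ s.val) * (∑ d ∈ Df, z ^ d.val) = 0 := by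
  rw [Finset.sum_mul_sum]
  have key : ∀ s ∈ Af, ∀ d ∈ Df, z ^ s.val * z ^ d.val = z ^ (s + d).val := by
    intro s _ d _
    rw [← pow_add, ZMod.val_add, pow_mod_eq hzn]
  rw [← sum_zmod_pow_val z hzn hz1]
  rw [← Finset.sum_product']
  refine Finset.sum_bij (fun sd _ => sd.1 + sd.2) (fun _ _ => Finset.mem_univ _) ?_ ?_ ?_
  · intro sd hsd sd' hsd' hsum
    rw [Finset.mem_product] at hsd hsd'
    obtain ⟨u, -, hu⟩ := hbij (sd.1 + sd.2)
    rw [hu sd ⟨hsd.1, hsd.2, rfl⟩, hu sd' ⟨hsd'.1, hsd'.2, hsum.symm⟩]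
  · intro g _
    obtain ⟨u, ⟨h1, h2, h3⟩, -⟩ := hbij g
    exact ⟨u, Finset.mem_product.mpr ⟨h1, h2⟩, h3⟩
  · intro sd hsd
    rw [Finset.mem_product] at hsd
    exact key _ hsd.1 _ hsd.2


lemma count_struct {n p k' : ℕ} [NeZero n] (hp : p.Prime) (T : Finset (ZMod n))
    (hT : T.card = p) (z : ℂ) (hz : IsPrimitiveRoot z (p ^ (k' + 1)))
    (hzero : ∑ s ∈ T, z ^ s.val = 0) :
    ∃ q : ℕ → ℤ,
      (∀ r < p ^ k', ∀ j < p,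
        (((T.filter (fun s => s.val % p ^ (k' + 1) = r + j * p ^ k')).card : ℤ) = q r)) ∧
      (∑ r ∈ Finset.range (p ^ k'), q r) = 1 := by
  set pk := p ^ (k' + 1) with hpk
  have hpkpos : 0 < pk := pow_pos hp.pos _
  set C : Polynomial ℤ := ∑ s ∈ T, Polynomial.X ^ (s.val % pk) with hC
  have hzpk : z ^ pk = 1 := hz.pow_eq_one
  -- aeval
  have haev : Polynomial.aeval z C = 0 := by
    rw [hC, map_sum]
    simp only [map_pow, Polynomial.aeval_X]
    rw [← hzero]
    exact Finset.sum_congr rfl fun s _ => pow_mod_eq hzpk _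
  -- cyclotomic divides
  have hdvd : Polynomial.cyclotomic pk ℤ ∣ C := by
    rw [Polynomial.cyclotomic_eq_minpoly hz hpkpos]
    exact minpoly.isIntegrallyClosed_dvd (hz.isIntegral hpkpos) haev
  -- coefficients are counts
  have hcoeffC : ∀ t : ℕ, C.coeff t = ((T.filter (fun s => s.val % pk = t)).card : ℤ) := by
    intro t
    rw [hC, Polynomial.finset_sum_coeff]
    simp only [Polynomial.coeff_X_pow]
    rw [Finset.sum_boole]
    congr 1
    exact congrArg Finset.card (Finset.filter_congr (fun s _ => by rw [eq_comm]))
  have hCdeg : C.natDegree ≤ pk - 1 := by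
    refine Polynomial.natDegree_sum_le_of_forall_le _ _ fun s _ => ?_
    rw [Polynomial.natDegree_X_pow]
    exact Nat.le_sub_one_of_lt (Nat.mod_lt _ hpkpos)
  have hCeval : C.eval 1 = (p : ℤ) := by
    rw [hC, Polynomial.eval_finset_sum]
    simp [hT]
  have hCne : C ≠ 0 := by
    intro h
    rw [h, Polynomial.eval_zero] at hCeval
    exact hp.ne_zero (by exact_mod_cast hCeval.symm)
  obtain ⟨Q, hQ⟩ := hdvd
  have hΦne : Polynomial.cyclotomic pk ℤ ≠ 0 := Polynomial.cyclotomic_ne_zero _ ℤ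
  have hQne : Q ≠ 0 := fun h => hCne (by rw [hQ, h, mul_zero])
  have hΦdeg : (Polynomial.cyclotomic pk ℤ).natDegree = p ^ k' * (p - 1) := by
    rw [Polynomial.natDegree_cyclotomic, hpk, Nat.totient_prime_pow hp (Nat.succ_pos _)]
    simp
  have hQdeg : Q.natDegree < p ^ k' := by
    have h1 : C.natDegree = (Polynomial.cyclotomic pk ℤ).natDegree + Q.natDegree := by
      rw [hQ, Polynomial.natDegree_mul hΦne hQne]
    have h2 : p ^ k' * p = pk := by rw [hpk, pow_succ]
    have h3 : p ^ k' * (p - 1) = p ^ k' * p - p ^ k' := by rw [Nat.mul_sub, mul_one]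
    have h4 : p ^ k' ≤ p ^ k' * p := Nat.le_mul_of_pos_right _ hp.pos
    have hpk' : 0 < p ^ k' := pow_pos hp.pos _
    have hCdeg' : C.natDegree ≤ p ^ k' * p - 1 := by rw [h2]; exact hCdeg
    omega
  have hgeom : Polynomial.cyclotomic pk ℤ = ∑ j ∈ Finset.range p, (Polynomial.X ^ p ^ k') ^ j :=
    Polynomial.cyclotomic_prime_pow_eq_geom_sum hp
  have hΦeval : (Polynomial.cyclotomic pk ℤ).eval 1 = (p : ℤ) := by
    rw [hgeom, Polynomial.eval_finset_sum]
    simp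
  have hQ1 : Q.eval 1 = 1 := by
    have hev := congrArg (Polynomial.eval 1) hQ
    rw [hCeval, Polynomial.eval_mul, hΦeval] at hev
    have hpne : (p : ℤ) ≠ 0 := by exact_mod_cast hp.ne_zero
    exact mul_left_cancel₀ hpne (by rw [mul_one, ← hev])
  have hcoeff : ∀ r < p ^ k', ∀ j₀ < p, C.coeff (r + j₀ * p ^ k') = Q.coeff r := by
    intro r hr j₀ hj₀
    rw [hQ, hgeom, Finset.sum_mul, Polynomial.finset_sum_coeff]
    have hterm : ∀ j ∈ Finset.range p,
        ((Polynomial.X ^ p ^ k') ^ j * Q).coeff (r + j₀ * p ^ k')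
          = if j = j₀ then Q.coeff r else 0 := by
      intro j hj
      rw [← pow_mul, mul_comm ((Polynomial.X : Polynomial ℤ) ^ (p ^ k' * j)) Q,
        Polynomial.coeff_mul_X_pow']
      have hmc : ∀ m : ℕ, p ^ k' * m = m * p ^ k' := fun m => mul_comm _ _
      have h3 := hmc j₀
      have h4 := hmc j
      rcases lt_trichotomy j j₀ with hlt | heq | hgt
      · have h2 : p ^ k' * (j + 1) ≤ p ^ k' * j₀ := Nat.mul_le_mul_left _ hlt
        have h5 : p ^ k' * (j + 1) = p ^ k' * j + p ^ k' := by ring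
        rw [if_pos (by omega), if_neg (Nat.ne_of_lt hlt)]
        exact Polynomial.coeff_eq_zero_of_natDegree_lt (by omega)
      · subst heq
        rw [if_pos (by omega), if_pos rfl]
        congr 1
        omega
      · have h2 : p ^ k' * (j₀ + 1) ≤ p ^ k' * j := Nat.mul_le_mul_left _ hgt
        have h5 : p ^ k' * (j₀ + 1) = p ^ k' * j₀ + p ^ k' := by ring
        rw [if_neg (by omega), if_neg (Nat.ne_of_gt hgt)]
    rw [Finset.sum_congr rfl hterm, Finset.sum_ite_eq' (Finset.range p) j₀]
    rw [if_pos (Finset.mem_range.mpr hj₀)]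
  refine ⟨fun r => Q.coeff r, ?_, ?_⟩
  · intro r hr j hj
    have hx := hcoeff r hr j hj
    rw [hcoeffC] at hx
    exact hx
  · have h5 := Polynomial.eval_eq_sum_range' hQdeg (1 : ℤ)
    simp only [one_pow, mul_one] at h5
    rw [← h5, hQ1]


lemma dvd_card_of_vanish {n p a : ℕ} [NeZero n] (hp : p.Prime) (ha : 0 < a)
    (Df : Finset (ZMod n))
    (hvan : ∀ z : ℂ, z ^ (p ^ a) = 1 → z ≠ 1 → ∑ d ∈ Df, z ^ d.val = 0) :
    ((p : ℤ) ^ a) ∣ (Df.card : ℤ) := by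
  set pa := p ^ a with hpa
  have hpapos : 0 < pa := pow_pos hp.pos _
  have hpane : pa ≠ 0 := hpapos.ne'
  set CD : Polynomial ℤ := ∑ d ∈ Df, Polynomial.X ^ (d.val % pa) with hCD
  set M : Polynomial ℤ := ∏ b ∈ (pa.divisors.erase 1), Polynomial.cyclotomic b ℤ with hM
  have hMgeom : M = ∑ i ∈ Finset.range pa, Polynomial.X ^ i :=
    Polynomial.prod_cyclotomic_eq_geom_sum hpapos ℤ
  have hMonic : M.Monic := Polynomial.monic_prod_of_monic _ _ fun b _ => Polynomial.cyclotomic.monic b ℤ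
  -- over ℚ, each cyclotomic divides
  have hdvdQ : ∀ b ∈ pa.divisors.erase 1,
      Polynomial.cyclotomic b ℚ ∣ CD.map (Int.castRingHom ℚ) := by
    intro b hb
    obtain ⟨hb1, hbd⟩ := Finset.mem_erase.mp hb
    obtain ⟨hbdvd, -⟩ := Nat.mem_divisors.mp hbd
    have hbpos : 0 < b := Nat.pos_of_dvd_of_pos hbdvd hpapos
    have hb2 : 1 < b := lt_of_le_of_ne hbpos (fun h => hb1 h.symm)
    set ζ : ℂ := Complex.exp (2 * Real.pi * Complex.I / b) with hζ
    have hprim : IsPrimitiveRoot ζ b := Complex.isPrimitiveRoot_exp b hbpos.ne'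
    have hζpa : ζ ^ pa = 1 := (hprim.pow_eq_one_iff_dvd pa).mpr hbdvd
    have hζ1 : ζ ≠ 1 := hprim.ne_one hb2
    have hsum := hvan ζ hζpa hζ1
    have haev : Polynomial.aeval ζ CD = 0 := by
      rw [hCD, map_sum]
      simp only [map_pow, Polynomial.aeval_X]
      rw [← hsum]
      exact Finset.sum_congr rfl fun d _ => pow_mod_eq hζpa _
    rw [Polynomial.cyclotomic_eq_minpoly_rat hprim hbpos]
    refine minpoly.dvd ℚ ζ ?_
    rw [show Int.castRingHom ℚ = algebraMap ℤ ℚ from rfl, aeval_map_algebraMap]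
    exact haev
  have hproddvd : (∏ b ∈ pa.divisors.erase 1, Polynomial.cyclotomic b ℚ) ∣
      CD.map (Int.castRingHom ℚ) := by
    refine Finset.prod_dvd_of_coprime ?_ hdvdQ
    intro b hb b' hb' hne
    exact Polynomial.cyclotomic.isCoprime_rat hne
  have hmapM : M.map (Int.castRingHom ℚ) = ∏ b ∈ pa.divisors.erase 1, Polynomial.cyclotomic b ℚ := by
    rw [hM, Polynomial.map_prod]
    exact Finset.prod_congr rfl fun b _ => Polynomial.map_cyclotomic b (Int.castRingHom ℚ)
  have hMdvd : M ∣ CD := by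
    rw [← Polynomial.modByMonic_eq_zero_iff_dvd hMonic]
    have h1 : (CD %ₘ M).map (Int.castRingHom ℚ) = 0 := by
      rw [Polynomial.map_modByMonic _ hMonic]
      rw [Polynomial.modByMonic_eq_zero_iff_dvd (hMonic.map _)]
      rw [hmapM]
      exact hproddvd
    exact (Polynomial.map_eq_zero_iff (f := Int.castRingHom ℚ)
      (fun x y h => by simpa using h)).mp h1
  obtain ⟨R, hR⟩ := hMdvd
  have hMeval : M.eval 1 = (pa : ℤ) := by
    rw [hMgeom, Polynomial.eval_finset_sum]
    simp
  have hCDeval : CD.eval 1 = (Df.card : ℤ) := by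
    rw [hCD, Polynomial.eval_finset_sum]
    simp
  refine ⟨R.eval 1, ?_⟩
  have := congrArg (Polynomial.eval 1) hR
  rw [hCDeval, Polynomial.eval_mul, hMeval] at this
  rw [this, hpa]
  push_cast
  ring

theorem stmt_6 (n p : ℕ) (hn : 3 ≤ n) (hp : p.Prime) (S : Finset (ZMod n))
    (h0 : (0 : ZMod n) ∉ S) (hsym : ∀ s ∈ S, -s ∈ S)
    (hdeg : S.card = p - 1)
    (hconn : AddSubgroup.closure (S : Set (ZMod n)) = ⊤)
    (hnoncomplete : insert (0 : ZMod n) (S : Set (ZMod n)) ≠ Set.univ) :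
    (∃ D : Set (ZMod n), IsCayleyPerfectCode (insert (0 : ZMod n) (S : Set (ZMod n))) D) ↔
      (p ∣ n ∧
        (insert (0 : ZMod n) (S : Set (ZMod n)) - insert (0 : ZMod n) (S : Set (ZMod n)))
            ∩ (AddSubgroup.zmultiples ((p : ZMod n)) : Set (ZMod n)) = {0}) := by
  haveI : NeZero n := ⟨by omega⟩
  haveI : NeZero p := ⟨hp.ne_zero⟩
  constructor
  · rintro ⟨D, hD⟩
    set A : Set (ZMod n) := insert (0 : ZMod n) (S : Set (ZMod n)) with hA
    set Af : Finset (ZMod n) := insert (0 : ZMod n) S with hAf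
    have hcoe : (Af : Set (ZMod n)) = A := by rw [hAf, Finset.coe_insert]
    have hAcard : Af.card = p := by
      rw [hAf, Finset.card_insert_of_notMem h0, hdeg]
      have := hp.two_le; omega
    set Df : Finset (ZMod n) := (Set.toFinite D).toFinset with hDf
    have hDcoe : ∀ x : ZMod n, x ∈ Df ↔ x ∈ D := fun x => Set.Finite.mem_toFinset _
    have hbij : ∀ g : ZMod n, ∃! sd : ZMod n × ZMod n,
        sd.1 ∈ Af ∧ sd.2 ∈ Df ∧ sd.1 + sd.2 = g := by
      intro g
      obtain ⟨u, ⟨h1, h2, h3⟩, hu⟩ := hD g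
      refine ⟨u, ⟨?_, (hDcoe _).mpr h2, h3⟩, ?_⟩
      · rw [← hcoe] at h1; exact h1
      · rintro v ⟨g1, g2, g3⟩
        exact hu v ⟨by rw [← hcoe]; exact g1, (hDcoe _).mp g2, g3⟩
    have hcard := code_card Af Df hbij
    rw [hAcard] at hcard
    have hpn : p ∣ n := Dvd.intro _ hcard
    refine ⟨hpn, ?_⟩
    set a := n.factorization p with ha
    have hnne : n ≠ 0 := NeZero.ne n
    have hapos : 0 < a := hp.factorization_pos_of_dvd hnne hpn
    have hpan : p ^ a ∣ n := Nat.ordProj_dvd n p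
    by_cases hex : ∃ z : ℂ, z ^ (p ^ a) = 1 ∧ z ≠ 1 ∧ ∑ s ∈ Af, z ^ s.val = 0
    · obtain ⟨z, hz1, hz2, hz3⟩ := hex
      have hord : orderOf z ∣ p ^ a := orderOf_dvd_of_pow_eq_one hz1
      obtain ⟨k, hk, hko⟩ := (Nat.dvd_prime_pow hp).mp hord
      have hk1 : 1 ≤ k := by
        rcases Nat.eq_zero_or_pos k with h | h
        · exfalso; apply hz2; rw [h, pow_zero] at hko; exact orderOf_eq_one_iff.mp hko
        · exact h
      obtain ⟨k', rfl⟩ : ∃ k', k = k' + 1 := ⟨k - 1, by omega⟩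
      have hprim : IsPrimitiveRoot z (p ^ (k' + 1)) := hko ▸ IsPrimitiveRoot.orderOf z
      have hpk1n : p ^ (k' + 1) ∣ n := hko ▸ orderOf_dvd_of_pow_eq_one
        (by obtain ⟨m, hm⟩ := hpan; rw [hm, pow_mul, hz1, one_pow])
      obtain ⟨q, hq1, hq2⟩ := count_struct hp Af hAcard z hprim hz3
      rcases Nat.eq_zero_or_pos k' with hk0 | hk0
      · -- k = 1 : transversal, prove the set equality
        subst hk0
        have hcnt : ∀ j < p, ((Af.filter (fun s => s.val % p = j)).card : ℤ) = 1 := by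
          intro j hj
          have h1 := hq1 0 (by norm_num) j hj
          have h2 : q 0 = 1 := by
            have := hq2
            rw [pow_zero, Finset.sum_range_one] at this
            exact this
          rw [h2] at h1
          rw [← h1]
          norm_num
        ext x
        simp only [Set.mem_inter_iff, Set.mem_singleton_iff]
        constructor
        · rintro ⟨hx1, hx2⟩
          obtain ⟨s, hs, s', hs', rfl⟩ := Set.mem_sub.mp hx1
          have hpi : (ZMod.castHom hpn (ZMod p)) (s - s') = 0 := (mem_zmult_iff hpn _).mp hx2
          have hmod : s.val % p = s'.val % p := by
            rw [map_sub, sub_eq_zero] at hpi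
            have e2 := hpi
            rw [ZMod.castHom_apply, ZMod.castHom_apply] at e2
            have e1 : ((s.val : ℕ) : ZMod p) = ((s'.val : ℕ) : ZMod p) := by
              rw [ZMod.natCast_val, ZMod.natCast_val]; exact e2
            exact (ZMod.natCast_eq_natCast_iff _ _ _).mp e1
          have hsAf : s ∈ Af := by rw [← hcoe] at hs; exact hs
          have hs'Af : s' ∈ Af := by rw [← hcoe] at hs'; exact hs'
          have hlt : s.val % p < p := Nat.mod_lt _ hp.pos
          have hone := hcnt (s.val % p) hlt
          have hcard1 : (Af.filter (fun t => t.val % p = s.val % p)).card ≤ 1 := by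
            exact_mod_cast le_of_eq hone
          have heq : s = s' := by
            refine Finset.card_le_one.mp hcard1 s ?_ s' ?_
            · exact Finset.mem_filter.mpr ⟨hsAf, rfl⟩
            · exact Finset.mem_filter.mpr ⟨hs'Af, hmod.symm⟩
          rw [heq, sub_self]
        · rintro rfl
          refine ⟨?_, AddSubgroup.zero_mem _⟩
          exact Set.mem_sub.mpr ⟨0, Set.mem_insert _ _, 0, Set.mem_insert _ _, sub_self 0⟩
      · -- k ≥ 2 : contradiction with connectivity
        exfalso
        have hqnn : ∀ r < p ^ k', 0 ≤ q r := by
          intro r hr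
          have := hq1 r hr 0 hp.pos
          rw [← this]
          positivity
        have hq0 : 1 ≤ q 0 := by
          have h1 := hq1 0 (pow_pos hp.pos _) 0 hp.pos
          have h2 : (0 : ZMod n) ∈ Af.filter (fun s => s.val % p ^ (k' + 1) = 0 + 0 * p ^ k') := by
            refine Finset.mem_filter.mpr ⟨Finset.mem_insert_self _ _, ?_⟩
            simp [ZMod.val_zero]
          have h3 : 0 < (Af.filter (fun s => s.val % p ^ (k' + 1) = 0 + 0 * p ^ k')).card :=
            Finset.card_pos.mpr ⟨0, h2⟩
          rw [← h1]
          exact_mod_cast h3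
        have hqz : ∀ r < p ^ k', r ≠ 0 → q r = 0 := by
          intro r hr hr0
          by_contra hne
          have hpos : 1 ≤ q r := lt_of_le_of_ne (hqnn r hr) (Ne.symm hne)
          have hmem0 : (0 : ℕ) ∈ Finset.range (p ^ k') := Finset.mem_range.mpr (pow_pos hp.pos _)
          have hmemr : r ∈ (Finset.range (p ^ k')).erase 0 :=
            Finset.mem_erase.mpr ⟨hr0, Finset.mem_range.mpr hr⟩
          have hsplit := Finset.add_sum_erase _ q hmem0
          have hge : q r ≤ ∑ x ∈ (Finset.range (p ^ k')).erase 0, q x := by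
            refine Finset.single_le_sum (fun i hi => ?_) hmemr
            exact hqnn i (Finset.mem_range.mp (Finset.mem_erase.mp hi).2)
          omega
        have hdvdval : ∀ s ∈ Af, p ^ k' ∣ s.val := by
          intro s hs
          set t := s.val % p ^ (k' + 1) with htd
          have htlt : t < p ^ (k' + 1) := Nat.mod_lt _ (pow_pos hp.pos _)
          set r := t % p ^ k' with hrd
          set j := t / p ^ k' with hjd
          have hrlt : r < p ^ k' := Nat.mod_lt _ (pow_pos hp.pos _)
          have hjlt : j < p := by
            have h1 : p ^ (k' + 1) = p ^ k' * p := by rw [pow_succ]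
            rw [hjd]
            exact Nat.div_lt_of_lt_mul (by rw [← pow_succ]; exact htlt)
          have htrj : t = r + j * p ^ k' := by
            rw [hrd, hjd, mul_comm]
            exact (Nat.mod_add_div t (p ^ k')).symm
          have hcount := hq1 r hrlt j hjlt
          have hmem : s ∈ Af.filter (fun u => u.val % p ^ (k' + 1) = r + j * p ^ k') := by
            refine Finset.mem_filter.mpr ⟨hs, ?_⟩
            rw [← htrj]
          have hpos : 0 < (Af.filter (fun u => u.val % p ^ (k' + 1) = r + j * p ^ k')).card :=
            Finset.card_pos.mpr ⟨s, hmem⟩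
          have hq_pos : 1 ≤ q r := by
            rw [← hcount]; exact_mod_cast hpos
          have hr0 : r = 0 := by
            by_contra hne
            rw [hqz r hrlt hne] at hq_pos
            omega
          have : s.val % p ^ k' = 0 := by
            rw [← Nat.mod_mod_of_dvd s.val (pow_dvd_pow p (Nat.le_succ k')), ← htd, ← hrd, hr0]
          exact Nat.dvd_of_mod_eq_zero this
        -- S generates a proper subgroup
        have hsub : (S : Set (ZMod n)) ⊆ (AddSubgroup.zmultiples (((p ^ k' : ℕ) : ZMod n)) : Set (ZMod n)) := by
          intro s hs
          exact mem_zmult_of_dvd_val (hdvdval s (Finset.mem_insert_of_mem hs))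
        have hle : AddSubgroup.closure (S : Set (ZMod n)) ≤
            AddSubgroup.zmultiples (((p ^ k' : ℕ) : ZMod n)) :=
          (AddSubgroup.closure_le _).mpr hsub
        rw [hconn] at hle
        have h1mem : (1 : ZMod n) ∈ AddSubgroup.zmultiples (((p ^ k' : ℕ) : ZMod n)) :=
          hle (AddSubgroup.mem_top _)
        obtain ⟨c, hc⟩ := h1mem
        have hc' : ((c * (p ^ k' : ℕ) - 1 : ℤ) : ZMod n) = 0 := by
          have : (c : ℤ) • (((p ^ k' : ℕ) : ZMod n)) = 1 := hc
          rw [zsmul_eq_mul] at this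
          push_cast at this ⊢
          rw [this]
          ring
        have hndvd : (n : ℤ) ∣ c * (p ^ k' : ℕ) - 1 := (ZMod.intCast_zmod_eq_zero_iff_dvd _ _).mp hc'
        have hpk'n : ((p ^ k' : ℕ) : ℤ) ∣ (n : ℤ) := by
          exact_mod_cast dvd_trans (pow_dvd_pow p (Nat.le_succ k')) hpk1n
        have hdvd1 : ((p ^ k' : ℕ) : ℤ) ∣ 1 := by
          have h2 : ((p ^ k' : ℕ) : ℤ) ∣ c * (p ^ k' : ℕ) - 1 := dvd_trans hpk'n hndvd
          have h3 : ((p ^ k' : ℕ) : ℤ) ∣ c * (p ^ k' : ℕ) := dvd_mul_left _ _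
          have h4 := dvd_sub h3 h2
          simpa using h4
        have : (p : ℤ) ^ k' ≤ 1 := by
          have := Int.le_of_dvd one_pos hdvd1
          exact_mod_cast this
        have hge : (2 : ℤ) ≤ (p : ℤ) ^ k' := by
          calc (2 : ℤ) ≤ (p : ℤ) := by exact_mod_cast hp.two_le
          _ ≤ (p : ℤ) ^ k' := le_self_pow₀ (by exact_mod_cast hp.one_lt.le) hk0.ne'
        omega
    · exfalso
      push_neg at hex
      have hvan : ∀ z : ℂ, z ^ (p ^ a) = 1 → z ≠ 1 → ∑ d ∈ Df, z ^ d.val = 0 := by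
        intro z h1 h2
        have hzn : z ^ n = 1 := by
          obtain ⟨m, hm⟩ := hpan; rw [hm, pow_mul, h1, one_pow]
        rcases mul_eq_zero.mp (code_sum Af Df hbij z hzn h2) with h | h
        · exact absurd h (hex z h1 h2)
        · exact h
      have hdvd := dvd_card_of_vanish hp hapos Df hvan
      have hdvdn : p ^ a ∣ Df.card := by
        have : ((p ^ a : ℕ) : ℤ) ∣ (Df.card : ℤ) := by push_cast; exact hdvd
        exact_mod_cast this
      obtain ⟨t, ht⟩ := hdvdn
      have : p ^ (a + 1) ∣ n := ⟨t, by rw [← hcard, ht, pow_succ]; ring⟩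
      exact Nat.pow_succ_factorization_not_dvd hnne hp this
  · rintro ⟨hpn, hint⟩
    exact ⟨(AddSubgroup.zmultiples ((p : ZMod n)) : Set (ZMod n)),
      sufficiency hp S h0 hdeg hpn hint⟩
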